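/- Let p be a prime and s ≥ 1. In the formal power series ring F_p[ζ][[t]], where F_p[ζ] is the polynomial ring over F_p = ℤ/p in one indeterminate ζ, one has (1 + Σ_{m≥1} (−1)^m ζ^{(p^{ms}−1)/(p^s−1)} t^{p^{ms}−1}) · (1 + Σ_{n≥1} (−1)^n C(np^s − 1, n) ζ^n t^{n(p^s−1)}) = 1, where the binomial coefficients C(np^s − 1, n) are taken modulo p and the exponent (p^{ms}−1)/(p^s−1) = 1 + p^s + ⋯ + p^{(m−1)s}. (This is the inverse-series identity of the paper's Lemma 5.4; in characteristic 2 all signs are immaterial.) -/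

import Mathlib

open Classical in
/-- The power series `1 + Σ_{m≥1} (−1)^m ζ^{(p^{ms}−1)/(p^s−1)} t^{p^{ms}−1}`
in `F_p[ζ][[t]]`, where `ζ = Polynomial.X`. -/
noncomputable def lhsSeries (p s : ℕ) : PowerSeries (Polynomial (ZMod p)) :=
  PowerSeries.mk fun j =>
    if j = 0 then 1
    else if h : ∃ m, 1 ≤ m ∧ j = p ^ (m * s) - 1 then
      (-1 : Polynomial (ZMod p)) ^ h.choose *
        Polynomial.X ^ ((p ^ (h.choose * s) - 1) / (p ^ s - 1))
    else 0

open Classical in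
/-- The power series `1 + Σ_{n≥1} (−1)^n C(np^s − 1, n) ζ^n t^{n(p^s−1)}`
in `F_p[ζ][[t]]`, the binomial coefficients being reduced mod `p`. -/
noncomputable def rhsSeries (p s : ℕ) : PowerSeries (Polynomial (ZMod p)) :=
  PowerSeries.mk fun j =>
    if j = 0 then 1
    else if h : ∃ n, 1 ≤ n ∧ j = n * (p ^ s - 1) then
      (-1 : Polynomial (ZMod p)) ^ h.choose *
        ((Nat.choose (h.choose * p ^ s - 1) h.choose : ZMod p) •
          Polynomial.X ^ h.choose)
    else 0


open Nat Finset

namespace InvAux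

variable {p : ℕ} [Fact p.Prime]

lemma lucas_p' (a b : ℕ) :
    ((a.choose b : ZMod p)) = ((a % p).choose (b % p) : ℕ) * ((a / p).choose (b / p) : ℕ) := by
  have := Choose.choose_modEq_choose_mod_mul_choose_div_nat (n := a) (k := b) (p := p)
  exact_mod_cast (ZMod.natCast_eq_natCast_iff _ _ _).mpr this

lemma lucas_q (s : ℕ) (a b : ℕ) :
    ((a.choose b : ZMod p)) =
      ((a % p ^ s).choose (b % p ^ s) : ℕ) * ((a / p ^ s).choose (b / p ^ s) : ℕ) := by
  induction s generalizing a b with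
  | zero => simp [Nat.mod_one]
  | succ s ih =>
      have hps : (p : ℕ) ^ (s + 1) = p * p ^ s := by ring
      have h1 : ∀ x : ℕ, x % p ^ (s+1) % p = x % p := fun x =>
        Nat.mod_mod_of_dvd x (dvd_pow_self p (succ_ne_zero s))
      have h2 : ∀ x : ℕ, x % p ^ (s+1) / p = x / p % p ^ s := fun x => by
        rw [hps, Nat.mod_mul_right_div_self]
      have h3 : ∀ x : ℕ, x / p ^ (s+1) = x / p / p ^ s := fun x => by
        rw [Nat.div_div_eq_div_mul, hps, mul_comm]
      rw [lucas_p' a b, ih (a / p) (b / p),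
        lucas_p' (a % p ^ (s+1)) (b % p ^ (s+1))]
      rw [h1, h1, h2, h2, h3, h3]
      ring

lemma neg_one_pow_p' {R : Type*} [CommRing R] [CharP R p] : ((-1 : R)) ^ p = -1 := by
  rcases (Fact.out : p.Prime).eq_two_or_odd' with h | h
  · subst h
    have : (2 : R) = 0 := by exact_mod_cast CharP.cast_eq_zero R 2
    have h1 : (-1 : R) = 1 := by linear_combination -this
    rw [h1, one_pow]
  · exact h.neg_one_pow

lemma neg_one_pow_q' {R : Type*} [CommRing R] [CharP R p] (s : ℕ) (hs : 1 ≤ s) :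
    ((-1 : R)) ^ (p ^ s) = -1 := by
  induction s with
  | zero => omega
  | succ s ih =>
      rcases Nat.eq_zero_or_pos s with h | h
      · subst h; simpa using neg_one_pow_p' (p := p)
      · rw [pow_succ, pow_mul, ih h, neg_one_pow_p' (p := p)]

lemma choose_p_sub_one' (j : ℕ) (hj : j < p) :
    ((Nat.choose (p - 1) j : ZMod p)) = (-1) ^ j := by
  induction j with
  | zero => simp
  | succ j ih =>
      have hj' : j < p := lt_of_succ_lt hj
      have hp1 : 1 ≤ p := (Fact.out : p.Prime).one_le
      have hpas : (p - 1).choose j + (p - 1).choose (j + 1) = p.choose (j + 1) := by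
        rw [← Nat.choose_succ_succ' (p - 1) j, Nat.sub_add_cancel hp1]
      have hdvd : (p : ℕ) ∣ p.choose (j + 1) :=
        (Fact.out : p.Prime).dvd_choose_self (succ_ne_zero j) hj
      have h0 : ((p - 1).choose j : ZMod p) + ((p - 1).choose (j + 1) : ZMod p) = 0 := by
        rw [← Nat.cast_add, hpas, ZMod.natCast_eq_zero_iff]
        exact hdvd
      rw [ih hj'] at h0
      rw [pow_succ]
      linear_combination h0

lemma choose_q_sub_one (s : ℕ) (r : ℕ) (hr : r < p ^ s) :
    ((Nat.choose (p ^ s - 1) r : ZMod p)) = (-1) ^ r := by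
  induction s generalizing r with
  | zero =>
      have : r = 0 := by simpa using hr
      subst this; simp
  | succ s ih =>
      have hp1 : 1 ≤ p := (Fact.out : p.Prime).one_le
      have hps : 1 ≤ p ^ s := Nat.one_le_pow _ _ (by omega)
      have hq : p ^ (s + 1) = p ^ s * p := by ring
      have hsplit : p ^ (s + 1) - 1 = (p - 1) + (p ^ s - 1) * p := by
        have e1 : (p ^ s - 1) * p = p ^ s * p - p := by rw [Nat.sub_mul, one_mul]
        have e2 : p ≤ p ^ s * p := Nat.le_mul_of_pos_left p hps
        omega
      have hmod : (p ^ (s + 1) - 1) % p = p - 1 := by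
        rw [hsplit, Nat.add_mul_mod_self_right, Nat.mod_eq_of_lt (by omega)]
      have hdiv : (p ^ (s + 1) - 1) / p = p ^ s - 1 := by
        rw [hsplit, Nat.add_mul_div_right _ _ (by omega : 0 < p), Nat.div_eq_of_lt (by omega)]
        omega
      have hrp : r / p < p ^ s := by
        rw [Nat.div_lt_iff_lt_mul (by omega : 0 < p)]
        calc r < p ^ (s+1) := hr
          _ = p ^ s * p := hq
      rw [lucas_p' (p ^ (s+1) - 1) r, hmod, hdiv,
        choose_p_sub_one' (r % p) (Nat.mod_lt _ (by omega)), ih _ hrp]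
      conv_rhs => rw [← Nat.div_add_mod r p]
      rw [pow_add, pow_mul, neg_one_pow_p' (p := p), mul_comm]

/-- `C(X q, X) ≡ 0 mod p` for `X ≥ 1`, `q = p^s`, `s ≥ 1`. -/
lemma g_zero (s : ℕ) (hs : 1 ≤ s) : ∀ X, 1 ≤ X →
    ((Nat.choose (X * p ^ s) X : ZMod p)) = 0 := by
  intro X
  induction X using Nat.strong_induction_on with
  | _ X ih =>
      intro hX
      have hp1 : 1 < p := (Fact.out : p.Prime).one_lt
      have hq : 2 ≤ p ^ s := by
        calc 2 ≤ p := hp1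
          _ = p ^ 1 := (pow_one p).symm
          _ ≤ p ^ s := Nat.pow_le_pow_right (by omega) hs
      rw [lucas_q s, Nat.mul_mod_left, Nat.mul_div_cancel _ (by omega : 0 < p ^ s)]
      rcases Nat.eq_zero_or_pos (X % p ^ s) with h | h
      · -- X divisible by q
        have hXd : X = (X / p ^ s) * p ^ s :=
          (Nat.div_mul_cancel (Nat.dvd_of_mod_eq_zero h)).symm
        have h1 : 1 ≤ X / p ^ s := by
          rcases Nat.eq_zero_or_pos (X / p ^ s) with h' | h'
          · rw [h'] at hXd; omega
          · exact h'
        have hlt : X / p ^ s < X := Nat.div_lt_self (by omega) (by omega)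
        have := ih (X / p ^ s) hlt h1
        rw [h, Nat.choose_self]
        calc ((1 : ℕ) : ZMod p) * ((X.choose (X / p ^ s) : ℕ) : ZMod p)
            = ((X.choose (X / p ^ s) : ℕ) : ZMod p) := by rw [Nat.cast_one, one_mul]
          _ = 0 := by rw [← hXd] at this; exact this
      · rw [Nat.choose_eq_zero_of_lt h]
        simp

/-- `E q m = 1 + q + ... + q^(m-1)`. -/
def E (q : ℕ) : ℕ → ℕ
  | 0 => 0
  | m + 1 => q * E q m + 1

lemma E_zero (q : ℕ) : E q 0 = 0 := rfl
lemma E_succ (q : ℕ) (m : ℕ) : E q (m + 1) = q * E q m + 1 := rfl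

lemma le_E (q : ℕ) (hq : 1 ≤ q) : ∀ m, m ≤ E q m := by
  intro m
  induction m with
  | zero => simp [E_zero]
  | succ m ih =>
      rw [E_succ]
      have : E q m ≤ q * E q m := Nat.le_mul_of_pos_left _ hq
      omega

lemma E_geom (q : ℕ) (hq : 1 ≤ q) : ∀ m, (q - 1) * E q m = q ^ m - 1 := by
  intro m
  induction m with
  | zero => simp [E_zero]
  | succ m ih =>
      rw [E_succ]
      have e1 : (q - 1) * (q * E q m + 1) = q * ((q - 1) * E q m) + (q - 1) := by ring
      have e2 : 1 ≤ q ^ m := Nat.one_le_pow _ _ hq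
      have e3 : q ^ (m + 1) = q * q ^ m := by ring
      have e4 : q * (q ^ m - 1) = q * q ^ m - q := by
        rw [Nat.mul_sub, mul_one]
      rw [e1, ih]
      have e5 : q ≤ q * q ^ m := Nat.le_mul_of_pos_right _ e2
      omega

/-- the coefficients `c n = C(n q - 1, n)`. -/
def cc (q n : ℕ) : ℕ := Nat.choose (n * q - 1) n

/-- `g j m = C(m q + j, m)`. -/
def gg (q j m : ℕ) : ℕ := Nat.choose (m * q + j) m

lemma gg_lucas (s : ℕ) (j D : ℕ) (hj : j < p ^ s) :
    ((gg (p ^ s) j D : ZMod p)) =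
      ((Nat.choose j (D % p ^ s) : ℕ) : ZMod p) * ((Nat.choose D (D / p ^ s) : ℕ) : ZMod p) := by
  rw [gg, lucas_q s]
  have h1 : (D * p ^ s + j) % p ^ s = j := by
    rw [Nat.add_comm, Nat.add_mul_mod_self_right, Nat.mod_eq_of_lt hj]
  have h2 : (D * p ^ s + j) / p ^ s = D := by
    rw [Nat.add_comm, Nat.add_mul_div_right _ _ (by omega : 0 < p ^ s),
      Nat.div_eq_of_lt hj]
    omega
  rw [h1, h2]

lemma cc_red (s : ℕ) (hs : 1 ≤ s) (n : ℕ) (hn : 1 ≤ n) :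
    ((cc (p ^ s) n : ZMod p)) =
      (-1) ^ (n % p ^ s) * ((Nat.choose (n - 1) (n / p ^ s) : ℕ) : ZMod p) := by
  have hp1 : 1 < p := (Fact.out : p.Prime).one_lt
  have hq : 2 ≤ p ^ s := by
    calc 2 ≤ p := hp1
      _ = p ^ 1 := (pow_one p).symm
      _ ≤ p ^ s := Nat.pow_le_pow_right (by omega) hs
  set q := p ^ s with hqdef
  have hsplit : n * q - 1 = (q - 1) + (n - 1) * q := by
    have e1 : (n - 1) * q = n * q - q := by rw [Nat.sub_mul, one_mul]
    have e2 : q ≤ n * q := Nat.le_mul_of_pos_left _ hn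
    omega
  have hmod : (n * q - 1) % q = q - 1 := by
    rw [hsplit, Nat.add_mul_mod_self_right, Nat.mod_eq_of_lt (by omega)]
  have hdiv : (n * q - 1) / q = n - 1 := by
    rw [hsplit, Nat.add_mul_div_right _ _ (by omega : 0 < q), Nat.div_eq_of_lt (by omega)]
    omega
  rw [cc, lucas_q s, hmod, hdiv, choose_q_sub_one s _ (Nat.mod_lt _ (by omega))]

lemma cc_frob (s : ℕ) (hs : 1 ≤ s) (D : ℕ) :
    ((cc (p ^ s) (D * p ^ s) : ZMod p)) = ((cc (p ^ s) D : ℕ) : ZMod p) := by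
  have hp1 : 1 < p := (Fact.out : p.Prime).one_lt
  have hq : 2 ≤ p ^ s := by
    calc 2 ≤ p := hp1
      _ = p ^ 1 := (pow_one p).symm
      _ ≤ p ^ s := Nat.pow_le_pow_right (by omega) hs
  rcases Nat.eq_zero_or_pos D with h | h
  · subst h; simp
  · have hD : 1 ≤ D * p ^ s := Nat.mul_pos h (by omega)
    rw [cc_red s hs _ hD, Nat.mul_mod_left, Nat.mul_div_cancel _ (by omega : 0 < p ^ s)]
    rw [pow_zero, one_mul, cc]

lemma Rsum_eq (s : ℕ) (hs : 1 ≤ s) :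
    ∀ x j, j + 2 ≤ p ^ s →
      (∑ m ∈ range (x + 1),
        if E (p ^ s) m ≤ x then ((gg (p ^ s) j (x - E (p ^ s) m) : ℕ) : ZMod p) else 0)
        = ((gg (p ^ s) (j + 1) x : ℕ) : ZMod p) := by
  have hp1 : 1 < p := (Fact.out : p.Prime).one_lt
  have hq : 2 ≤ p ^ s := by
    calc 2 ≤ p := hp1
      _ = p ^ 1 := (pow_one p).symm
      _ ≤ p ^ s := Nat.pow_le_pow_right (by omega) hs
  intro x
  induction x using Nat.strong_induction_on with
  | _ x ih =>
    intro j hj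
    rcases Nat.eq_zero_or_pos x with hx0 | hx1
    · subst hx0
      rw [Finset.sum_range_one, E_zero, if_pos (le_refl 0)]
      simp [gg]
    · have hρq : x % p ^ s < p ^ s := Nat.mod_lt _ (by omega)
      have hxX : p ^ s * (x / p ^ s) + x % p ^ s = x := Nat.div_add_mod x (p ^ s)
      have c1 : p ^ s * (x / p ^ s) = (x / p ^ s) * p ^ s := mul_comm _ _
      rcases Nat.eq_zero_or_pos (x % p ^ s) with hρ | hρ
      · -- ρ = 0 case
        have hX1 : 1 ≤ x / p ^ s := by
          rcases Nat.eq_zero_or_pos (x / p ^ s) with h' | h'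
          · rw [h', mul_zero] at hxX; omega
          · exact h'
        have hCx : ((Nat.choose x (x / p ^ s) : ℕ) : ZMod p) = 0 := by
          have hxe : x = (x / p ^ s) * p ^ s := by omega
          have hg := g_zero (p := p) s hs (x / p ^ s) hX1
          rw [← hxe] at hg
          exact hg
        have hrhs : ((gg (p ^ s) (j + 1) x : ℕ) : ZMod p) = 0 := by
          rw [gg_lucas s _ _ (by omega), hρ, Nat.choose_zero_right, Nat.cast_one, one_mul, hCx]
        rw [hrhs]
        apply Finset.sum_eq_zero
        intro m hm
        rcases m with _ | m'
        · rw [E_zero, if_pos (Nat.zero_le x), Nat.sub_zero,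
            gg_lucas s _ _ (by omega), hρ, hCx, mul_zero]
        · by_cases hle : E (p ^ s) (m' + 1) ≤ x
          · rw [if_pos hle]
            have hEm : p ^ s * E (p ^ s) m' + 1 ≤ x := by rw [E_succ] at hle; exact hle
            have hE' : E (p ^ s) m' ≤ x / p ^ s - 1 := by
              by_contra h'
              push_neg at h'
              have : p ^ s * (x / p ^ s) ≤ p ^ s * E (p ^ s) m' :=
                Nat.mul_le_mul_left _ (by omega)
              omega
            have hexp : (x / p ^ s - 1 - E (p ^ s) m') * p ^ s
                + E (p ^ s) m' * p ^ s + p ^ s = (x / p ^ s) * p ^ s := by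
              calc (x / p ^ s - 1 - E (p ^ s) m') * p ^ s + E (p ^ s) m' * p ^ s + p ^ s
                  = (x / p ^ s - 1 - E (p ^ s) m' + E (p ^ s) m' + 1) * p ^ s := by ring
                _ = (x / p ^ s) * p ^ s := by
                    congr 1
                    omega
            have c2 : p ^ s * E (p ^ s) m' = E (p ^ s) m' * p ^ s := mul_comm _ _
            have hD : x - E (p ^ s) (m' + 1)
                = (x / p ^ s - 1 - E (p ^ s) m') * p ^ s + (p ^ s - 1) := by
              rw [E_succ]
              omega
            rw [hD, gg_lucas s _ _ (by omega : j < p ^ s)]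
            have hm2 : ((x / p ^ s - 1 - E (p ^ s) m') * p ^ s + (p ^ s - 1)) % p ^ s
                = p ^ s - 1 := by
              rw [Nat.add_comm, Nat.add_mul_mod_self_right, Nat.mod_eq_of_lt (by omega)]
            rw [hm2, Nat.choose_eq_zero_of_lt (by omega : j < p ^ s - 1)]
            simp
          · rw [if_neg hle]
      · -- ρ ≥ 1 case
        rw [Finset.sum_range_succ']
        have htail : ∀ m' ∈ range x,
            (if E (p ^ s) (m' + 1) ≤ x
              then ((gg (p ^ s) j (x - E (p ^ s) (m' + 1)) : ℕ) : ZMod p) else 0)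
            = ((Nat.choose j (x % p ^ s - 1) : ℕ) : ZMod p) *
              (if E (p ^ s) m' ≤ x / p ^ s
                then ((gg (p ^ s) (x % p ^ s - 1) (x / p ^ s - E (p ^ s) m') : ℕ) : ZMod p)
                else 0) := by
          intro m' hm'
          have c2 : p ^ s * E (p ^ s) m' = E (p ^ s) m' * p ^ s := mul_comm _ _
          by_cases hle : E (p ^ s) m' ≤ x / p ^ s
          · have hml : E (p ^ s) m' * p ^ s ≤ (x / p ^ s) * p ^ s :=
              Nat.mul_le_mul_right _ hle
            have hle2 : E (p ^ s) (m' + 1) ≤ x := by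
              rw [E_succ]; omega
            rw [if_pos hle, if_pos hle2, E_succ]
            have hexp : (x / p ^ s - E (p ^ s) m') * p ^ s + E (p ^ s) m' * p ^ s
                = (x / p ^ s) * p ^ s := by
              calc (x / p ^ s - E (p ^ s) m') * p ^ s + E (p ^ s) m' * p ^ s
                  = (x / p ^ s - E (p ^ s) m' + E (p ^ s) m') * p ^ s := by ring
                _ = (x / p ^ s) * p ^ s := by congr 1; omega
            have hD : x - (p ^ s * E (p ^ s) m' + 1)
                = (x / p ^ s - E (p ^ s) m') * p ^ s + (x % p ^ s - 1) := by omega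
            rw [hD, gg_lucas s _ _ (by omega : j < p ^ s)]
            have hm2 : ((x / p ^ s - E (p ^ s) m') * p ^ s + (x % p ^ s - 1)) % p ^ s
                = x % p ^ s - 1 := by
              rw [Nat.add_comm, Nat.add_mul_mod_self_right, Nat.mod_eq_of_lt (by omega)]
            have hd2 : ((x / p ^ s - E (p ^ s) m') * p ^ s + (x % p ^ s - 1)) / p ^ s
                = x / p ^ s - E (p ^ s) m' := by
              rw [Nat.add_comm, Nat.add_mul_div_right _ _ (by omega : 0 < p ^ s),
                Nat.div_eq_of_lt (by omega)]
              omega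
            rw [hm2, hd2]
            simp [gg]
          · have hle2 : ¬ E (p ^ s) (m' + 1) ≤ x := by
              rw [E_succ]
              intro hcon
              apply hle
              by_contra h'
              push_neg at h'
              have h'' : p ^ s * (x / p ^ s + 1) ≤ p ^ s * E (p ^ s) m' :=
                Nat.mul_le_mul_left _ h'
              have hexp2 : p ^ s * (x / p ^ s + 1) = p ^ s * (x / p ^ s) + p ^ s := by ring
              omega
            rw [if_neg hle, if_neg hle2, mul_zero]
        rw [Finset.sum_congr rfl htail, ← Finset.mul_sum]
        have hXx : x / p ^ s + 1 ≤ x := by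
          have : x / p ^ s < x := Nat.div_lt_self (by omega) (by omega)
          omega
        have hshrink : (∑ m' ∈ range x,
              if E (p ^ s) m' ≤ x / p ^ s
                then ((gg (p ^ s) (x % p ^ s - 1) (x / p ^ s - E (p ^ s) m') : ℕ) : ZMod p)
                else 0)
            = ∑ m' ∈ range (x / p ^ s + 1),
                if E (p ^ s) m' ≤ x / p ^ s
                  then ((gg (p ^ s) (x % p ^ s - 1) (x / p ^ s - E (p ^ s) m') : ℕ) : ZMod p)
                  else 0 := by
          symm
          apply Finset.sum_subset
          · exact Finset.range_subset_range.mpr (by omega)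
          · intro m' hm' hnot
            rw [if_neg]
            have hEm' := le_E (p ^ s) (by omega) m'
            simp only [Finset.mem_range] at hm' hnot
            omega
        rw [hshrink, ih (x / p ^ s) (by omega) (x % p ^ s - 1) (by omega)]
        rw [show x % p ^ s - 1 + 1 = x % p ^ s by omega]
        rw [gg_lucas s (j + 1) x (by omega : j + 1 < p ^ s)]
        have hgx : (gg (p ^ s) (x % p ^ s) (x / p ^ s) : ℕ) = Nat.choose x (x / p ^ s) := by
          rw [gg]
          congr 1
          omega
        rw [hgx]
        have hf0 : (if E (p ^ s) 0 ≤ x then ((gg (p ^ s) j (x - E (p ^ s) 0) : ℕ) : ZMod p) else 0)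
            = ((Nat.choose j (x % p ^ s) : ℕ) : ZMod p) * ((Nat.choose x (x / p ^ s) : ℕ) : ZMod p) := by
          rw [E_zero, if_pos (Nat.zero_le x), Nat.sub_zero, gg_lucas s _ _ (by omega : j < p ^ s)]
        rw [hf0]
        have hpas : Nat.choose (j + 1) (x % p ^ s)
            = Nat.choose j (x % p ^ s - 1) + Nat.choose j (x % p ^ s) := by
          have h := Nat.choose_succ_succ' j (x % p ^ s - 1)
          rw [show x % p ^ s - 1 + 1 = x % p ^ s from by omega] at h
          exact h
        rw [hpas]
        push_cast
        ring

lemma Ssum_eq (s : ℕ) (hs : 1 ≤ s) : ∀ k,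
    (∑ m ∈ range (k + 1),
      if E (p ^ s) m ≤ k then ((cc (p ^ s) (k - E (p ^ s) m) : ℕ) : ZMod p) else 0)
      = if k = 0 then 1 else 0 := by
  have hp1 : 1 < p := (Fact.out : p.Prime).one_lt
  have hq : 2 ≤ p ^ s := by
    calc 2 ≤ p := hp1
      _ = p ^ 1 := (pow_one p).symm
      _ ≤ p ^ s := Nat.pow_le_pow_right (by omega) hs
  intro k
  induction k using Nat.strong_induction_on with
  | _ k ih =>
    rcases Nat.eq_zero_or_pos k with hk0 | hk1
    · subst hk0
      rw [if_pos rfl, Finset.sum_range_one, E_zero, if_pos (le_refl 0)]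
      simp [cc]
    · rw [if_neg (by omega)]
      have hxX : p ^ s * (k / p ^ s) + k % p ^ s = k := Nat.div_add_mod k (p ^ s)
      have c1 : p ^ s * (k / p ^ s) = (k / p ^ s) * p ^ s := mul_comm _ _
      have hρq : k % p ^ s < p ^ s := Nat.mod_lt _ (by omega)
      rw [Finset.sum_range_succ']
      rcases Nat.lt_or_ge (k % p ^ s) 2 with hr2 | hr2
      rcases Nat.eq_zero_or_pos (k % p ^ s) with hr0 | hr1
      · -- Case A : k % q = 0
        have hd1 : 1 ≤ k / p ^ s := by
          rcases Nat.eq_zero_or_pos (k / p ^ s) with h' | h'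
          · rw [h', mul_zero] at hxX; omega
          · exact h'
        -- head term
        have hke : k = (k / p ^ s) * p ^ s := by omega
        have hhead : (if E (p ^ s) 0 ≤ k then ((cc (p ^ s) (k - E (p ^ s) 0) : ℕ) : ZMod p) else 0)
            = ((cc (p ^ s) (k / p ^ s) : ℕ) : ZMod p) := by
          rw [E_zero, if_pos (Nat.zero_le k), Nat.sub_zero]
          have h := cc_frob (p := p) s hs (k / p ^ s)
          rw [← hke] at h
          exact h
        have hsign : ((-1 : ZMod p)) ^ (p ^ s - 1) = 1 := by
          have h1 : ((-1 : ZMod p)) ^ (p ^ s - 1) * (-1) ^ 1 = (-1) ^ (p ^ s) := by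
            rw [← pow_add]
            congr 1
            omega
          rw [neg_one_pow_q' (R := ZMod p) s hs, pow_one] at h1
          have hne : (-1 : ZMod p) ≠ 0 := by simp
          exact mul_right_cancel₀ hne (h1.trans (by ring))
        have htail : ∀ m' ∈ range k,
            (if E (p ^ s) (m' + 1) ≤ k
              then ((cc (p ^ s) (k - E (p ^ s) (m' + 1)) : ℕ) : ZMod p) else 0)
            = (if E (p ^ s) m' ≤ k / p ^ s - 1
                then ((gg (p ^ s) (p ^ s - 2) (k / p ^ s - 1 - E (p ^ s) m') : ℕ) : ZMod p)
                else 0) := by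
          intro m' hm'
          have c2 : p ^ s * E (p ^ s) m' = E (p ^ s) m' * p ^ s := mul_comm _ _
          by_cases hle : E (p ^ s) m' ≤ k / p ^ s - 1
          · have hml : E (p ^ s) m' * p ^ s ≤ (k / p ^ s - 1) * p ^ s :=
              Nat.mul_le_mul_right _ hle
            have hd1q : (k / p ^ s - 1) * p ^ s + p ^ s = (k / p ^ s) * p ^ s := by
              calc (k / p ^ s - 1) * p ^ s + p ^ s = (k / p ^ s - 1 + 1) * p ^ s := by ring
                _ = (k / p ^ s) * p ^ s := by congr 1; omega
            have hle2 : E (p ^ s) (m' + 1) ≤ k := by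
              rw [E_succ]; omega
            rw [if_pos hle, if_pos hle2, E_succ]
            have hexp : (k / p ^ s - 1 - E (p ^ s) m') * p ^ s + E (p ^ s) m' * p ^ s
                = (k / p ^ s - 1) * p ^ s := by
              calc (k / p ^ s - 1 - E (p ^ s) m') * p ^ s + E (p ^ s) m' * p ^ s
                  = (k / p ^ s - 1 - E (p ^ s) m' + E (p ^ s) m') * p ^ s := by ring
                _ = (k / p ^ s - 1) * p ^ s := by congr 1; omega
            have hD : k - (p ^ s * E (p ^ s) m' + 1)
                = (k / p ^ s - 1 - E (p ^ s) m') * p ^ s + (p ^ s - 1) := by omega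
            rw [hD, cc_red s hs _ (by omega)]
            have hm2 : ((k / p ^ s - 1 - E (p ^ s) m') * p ^ s + (p ^ s - 1)) % p ^ s
                = p ^ s - 1 := by
              rw [Nat.add_comm, Nat.add_mul_mod_self_right, Nat.mod_eq_of_lt (by omega)]
            have hd2 : ((k / p ^ s - 1 - E (p ^ s) m') * p ^ s + (p ^ s - 1)) / p ^ s
                = k / p ^ s - 1 - E (p ^ s) m' := by
              rw [Nat.add_comm, Nat.add_mul_div_right _ _ (by omega : 0 < p ^ s),
                Nat.div_eq_of_lt (by omega)]
              omega
            have hsub : (k / p ^ s - 1 - E (p ^ s) m') * p ^ s + (p ^ s - 1) - 1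
                = (k / p ^ s - 1 - E (p ^ s) m') * p ^ s + (p ^ s - 2) := by omega
            rw [hm2, hd2, hsign, one_mul, hsub]
            rfl
          · have hle2 : ¬ E (p ^ s) (m' + 1) ≤ k := by
              rw [E_succ]
              intro hcon
              apply hle
              by_contra h'
              push_neg at h'
              have h'' : p ^ s * (k / p ^ s) ≤ p ^ s * E (p ^ s) m' :=
                Nat.mul_le_mul_left _ (by omega)
              omega
            rw [if_neg hle, if_neg hle2]
        rw [Finset.sum_congr rfl htail, hhead]
        have hshrink : (∑ m' ∈ range k,
              if E (p ^ s) m' ≤ k / p ^ s - 1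
                then ((gg (p ^ s) (p ^ s - 2) (k / p ^ s - 1 - E (p ^ s) m') : ℕ) : ZMod p)
                else 0)
            = ∑ m' ∈ range (k / p ^ s - 1 + 1),
                if E (p ^ s) m' ≤ k / p ^ s - 1
                  then ((gg (p ^ s) (p ^ s - 2) (k / p ^ s - 1 - E (p ^ s) m') : ℕ) : ZMod p)
                  else 0 := by
          symm
          apply Finset.sum_subset
          · apply Finset.range_subset_range.mpr
            have : k / p ^ s ≤ k := Nat.div_le_self _ _
            omega
          · intro m' hm' hnot
            rw [if_neg]
            have hEm' := le_E (p ^ s) (by omega) m'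
            simp only [Finset.mem_range] at hm' hnot
            omega
        rw [hshrink, Rsum_eq (p := p) s hs (k / p ^ s - 1) (p ^ s - 2) (by omega)]
        rw [show p ^ s - 2 + 1 = p ^ s - 1 by omega]
        -- gg q (q-1) (d-1) = C(dq - 1, d - 1)
        have hggc : (gg (p ^ s) (p ^ s - 1) (k / p ^ s - 1) : ℕ)
            = Nat.choose ((k / p ^ s) * p ^ s - 1) (k / p ^ s - 1) := by
          rw [gg]
          congr 1
          have hd1q : (k / p ^ s - 1) * p ^ s + p ^ s = (k / p ^ s) * p ^ s := by
            calc (k / p ^ s - 1) * p ^ s + p ^ s = (k / p ^ s - 1 + 1) * p ^ s := by ring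
              _ = (k / p ^ s) * p ^ s := by congr 1; omega
          omega
        have hpas : Nat.choose ((k / p ^ s) * p ^ s) (k / p ^ s)
            = Nat.choose ((k / p ^ s) * p ^ s - 1) (k / p ^ s - 1)
              + Nat.choose ((k / p ^ s) * p ^ s - 1) (k / p ^ s) := by
          have h := Nat.choose_succ_succ' ((k / p ^ s) * p ^ s - 1) (k / p ^ s - 1)
          have e1 : (k / p ^ s) * p ^ s - 1 + 1 = (k / p ^ s) * p ^ s := by
            have : 1 ≤ (k / p ^ s) * p ^ s := by omega
            omega
          have e2 : k / p ^ s - 1 + 1 = k / p ^ s := by omega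
          rw [e1, e2] at h
          exact h
        have hg0 := g_zero (p := p) s hs (k / p ^ s) hd1
        rw [hpas] at hg0
        push_cast at hg0
        rw [hggc]
        have : ((cc (p ^ s) (k / p ^ s) : ℕ) : ZMod p)
            = ((Nat.choose ((k / p ^ s) * p ^ s - 1) (k / p ^ s) : ℕ) : ZMod p) := by rfl
        rw [this]
        linear_combination hg0
      · -- Case B : k % q = 1
        have hr1' : k % p ^ s = 1 := by omega
        have hhead : (if E (p ^ s) 0 ≤ k then ((cc (p ^ s) (k - E (p ^ s) 0) : ℕ) : ZMod p) else 0)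
            = -(((Nat.choose ((k / p ^ s) * p ^ s) (k / p ^ s) : ℕ) : ZMod p)) := by
          rw [E_zero, if_pos (Nat.zero_le k), Nat.sub_zero, cc_red s hs _ (by omega), hr1',
            pow_one]
          have : k - 1 = (k / p ^ s) * p ^ s := by omega
          rw [this]
          ring
        have htail : ∀ m' ∈ range k,
            (if E (p ^ s) (m' + 1) ≤ k
              then ((cc (p ^ s) (k - E (p ^ s) (m' + 1)) : ℕ) : ZMod p) else 0)
            = (if E (p ^ s) m' ≤ k / p ^ s
                then ((cc (p ^ s) (k / p ^ s - E (p ^ s) m') : ℕ) : ZMod p)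
                else 0) := by
          intro m' hm'
          have c2 : p ^ s * E (p ^ s) m' = E (p ^ s) m' * p ^ s := mul_comm _ _
          by_cases hle : E (p ^ s) m' ≤ k / p ^ s
          · have hml : E (p ^ s) m' * p ^ s ≤ (k / p ^ s) * p ^ s :=
              Nat.mul_le_mul_right _ hle
            have hle2 : E (p ^ s) (m' + 1) ≤ k := by
              rw [E_succ]; omega
            rw [if_pos hle, if_pos hle2, E_succ]
            have hexp : (k / p ^ s - E (p ^ s) m') * p ^ s + E (p ^ s) m' * p ^ s
                = (k / p ^ s) * p ^ s := by
              calc (k / p ^ s - E (p ^ s) m') * p ^ s + E (p ^ s) m' * p ^ s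
                  = (k / p ^ s - E (p ^ s) m' + E (p ^ s) m') * p ^ s := by ring
                _ = (k / p ^ s) * p ^ s := by congr 1; omega
            have hD : k - (p ^ s * E (p ^ s) m' + 1)
                = (k / p ^ s - E (p ^ s) m') * p ^ s := by omega
            rw [hD]
            exact cc_frob (p := p) s hs _
          · have hle2 : ¬ E (p ^ s) (m' + 1) ≤ k := by
              rw [E_succ]
              intro hcon
              apply hle
              by_contra h'
              push_neg at h'
              have h'' : p ^ s * (k / p ^ s + 1) ≤ p ^ s * E (p ^ s) m' :=
                Nat.mul_le_mul_left _ h'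
              have hexp2 : p ^ s * (k / p ^ s + 1) = p ^ s * (k / p ^ s) + p ^ s := by ring
              omega
            rw [if_neg hle, if_neg hle2]
        rw [Finset.sum_congr rfl htail, hhead]
        have hshrink : (∑ m' ∈ range k,
              if E (p ^ s) m' ≤ k / p ^ s
                then ((cc (p ^ s) (k / p ^ s - E (p ^ s) m') : ℕ) : ZMod p)
                else 0)
            = ∑ m' ∈ range (k / p ^ s + 1),
                if E (p ^ s) m' ≤ k / p ^ s
                  then ((cc (p ^ s) (k / p ^ s - E (p ^ s) m') : ℕ) : ZMod p)
                  else 0 := by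
          symm
          apply Finset.sum_subset
          · apply Finset.range_subset_range.mpr
            have h1 : p ^ s * (k / p ^ s) ≥ 2 * (k / p ^ s) := by
              apply Nat.mul_le_mul_right
              omega
            have h2 : 2 * (k / p ^ s) ≥ k / p ^ s + k / p ^ s := by omega
            omega
          · intro m' hm' hnot
            rw [if_neg]
            have hEm' := le_E (p ^ s) (by omega) m'
            simp only [Finset.mem_range] at hm' hnot
            omega
        rw [hshrink, ih (k / p ^ s) (Nat.div_lt_self (by omega) (by omega))]
        rcases Nat.eq_zero_or_pos (k / p ^ s) with hd0 | hd1
        · rw [if_pos hd0, hd0]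
          simp
        · rw [if_neg (by omega)]
          rw [g_zero (p := p) s hs _ hd1]
          ring
      · -- Case C : k % q ≥ 2
        have hhead : (if E (p ^ s) 0 ≤ k then ((cc (p ^ s) (k - E (p ^ s) 0) : ℕ) : ZMod p) else 0)
            = (-1) ^ (k % p ^ s) *
              ((gg (p ^ s) (k % p ^ s - 1) (k / p ^ s) : ℕ) : ZMod p) := by
          rw [E_zero, if_pos (Nat.zero_le k), Nat.sub_zero, cc_red s hs _ (by omega)]
          congr 2
          rw [gg]
          congr 1
          omega
        have htail : ∀ m' ∈ range k,
            (if E (p ^ s) (m' + 1) ≤ k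
              then ((cc (p ^ s) (k - E (p ^ s) (m' + 1)) : ℕ) : ZMod p) else 0)
            = (-1) ^ (k % p ^ s - 1) *
              (if E (p ^ s) m' ≤ k / p ^ s
                then ((gg (p ^ s) (k % p ^ s - 2) (k / p ^ s - E (p ^ s) m') : ℕ) : ZMod p)
                else 0) := by
          intro m' hm'
          have c2 : p ^ s * E (p ^ s) m' = E (p ^ s) m' * p ^ s := mul_comm _ _
          by_cases hle : E (p ^ s) m' ≤ k / p ^ s
          · have hml : E (p ^ s) m' * p ^ s ≤ (k / p ^ s) * p ^ s :=
              Nat.mul_le_mul_right _ hle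
            have hle2 : E (p ^ s) (m' + 1) ≤ k := by
              rw [E_succ]; omega
            rw [if_pos hle, if_pos hle2, E_succ]
            have hexp : (k / p ^ s - E (p ^ s) m') * p ^ s + E (p ^ s) m' * p ^ s
                = (k / p ^ s) * p ^ s := by
              calc (k / p ^ s - E (p ^ s) m') * p ^ s + E (p ^ s) m' * p ^ s
                  = (k / p ^ s - E (p ^ s) m' + E (p ^ s) m') * p ^ s := by ring
                _ = (k / p ^ s) * p ^ s := by congr 1; omega
            have hD : k - (p ^ s * E (p ^ s) m' + 1)
                = (k / p ^ s - E (p ^ s) m') * p ^ s + (k % p ^ s - 1) := by omega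
            rw [hD, cc_red s hs _ (by omega)]
            have hm2 : ((k / p ^ s - E (p ^ s) m') * p ^ s + (k % p ^ s - 1)) % p ^ s
                = k % p ^ s - 1 := by
              rw [Nat.add_comm, Nat.add_mul_mod_self_right, Nat.mod_eq_of_lt (by omega)]
            have hd2 : ((k / p ^ s - E (p ^ s) m') * p ^ s + (k % p ^ s - 1)) / p ^ s
                = k / p ^ s - E (p ^ s) m' := by
              rw [Nat.add_comm, Nat.add_mul_div_right _ _ (by omega : 0 < p ^ s),
                Nat.div_eq_of_lt (by omega)]
              omega
            have hsub : (k / p ^ s - E (p ^ s) m') * p ^ s + (k % p ^ s - 1) - 1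
                = (k / p ^ s - E (p ^ s) m') * p ^ s + (k % p ^ s - 2) := by omega
            rw [hm2, hd2, hsub]
            rfl
          · have hle2 : ¬ E (p ^ s) (m' + 1) ≤ k := by
              rw [E_succ]
              intro hcon
              apply hle
              by_contra h'
              push_neg at h'
              have h'' : p ^ s * (k / p ^ s + 1) ≤ p ^ s * E (p ^ s) m' :=
                Nat.mul_le_mul_left _ h'
              have hexp2 : p ^ s * (k / p ^ s + 1) = p ^ s * (k / p ^ s) + p ^ s := by ring
              omega
            rw [if_neg hle, if_neg hle2, mul_zero]
        rw [Finset.sum_congr rfl htail, ← Finset.mul_sum, hhead]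
        have hshrink : (∑ m' ∈ range k,
              if E (p ^ s) m' ≤ k / p ^ s
                then ((gg (p ^ s) (k % p ^ s - 2) (k / p ^ s - E (p ^ s) m') : ℕ) : ZMod p)
                else 0)
            = ∑ m' ∈ range (k / p ^ s + 1),
                if E (p ^ s) m' ≤ k / p ^ s
                  then ((gg (p ^ s) (k % p ^ s - 2) (k / p ^ s - E (p ^ s) m') : ℕ) : ZMod p)
                  else 0 := by
          symm
          apply Finset.sum_subset
          · apply Finset.range_subset_range.mpr
            have h1 : k / p ^ s ≤ (k / p ^ s) * p ^ s := Nat.le_mul_of_pos_right _ (by omega)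
            omega
          · intro m' hm' hnot
            rw [if_neg]
            have hEm' := le_E (p ^ s) (by omega) m'
            simp only [Finset.mem_range] at hm' hnot
            omega
        rw [hshrink, Rsum_eq (p := p) s hs (k / p ^ s) (k % p ^ s - 2) (by omega)]
        rw [show k % p ^ s - 2 + 1 = k % p ^ s - 1 by omega]
        have hrr : k % p ^ s = (k % p ^ s - 1) + 1 := by omega
        have hpow : ((-1 : ZMod p)) ^ (k % p ^ s) = (-1) ^ (k % p ^ s - 1) * (-1) := by
          conv_lhs => rw [hrr]
          rw [pow_succ]
        rw [hpow]
        ring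

end InvAux

/-- Lemma 5.4 (inverse-series identity): for a prime `p` and `s ≥ 1`,
`(1 + Σ_{m≥1} (−1)^m ζ^{(p^{ms}−1)/(p^s−1)} t^{p^{ms}−1}) ·
 (1 + Σ_{n≥1} (−1)^n C(np^s − 1, n) ζ^n t^{n(p^s−1)}) = 1` in `F_p[ζ][[t]]`. -/
theorem inverse_series_identity (p : ℕ) (hp : p.Prime) (s : ℕ) (hs : 1 ≤ s) :
    lhsSeries p s * rhsSeries p s = 1 := by
  haveI : Fact p.Prime := ⟨hp⟩
  classical
  have hp1 : 1 < p := hp.one_lt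
  have hq : 2 ≤ p ^ s := by
    calc 2 ≤ p := hp1
      _ = p ^ 1 := (pow_one p).symm
      _ ≤ p ^ s := Nat.pow_le_pow_right (by omega) hs
  have hpow : ∀ m : ℕ, p ^ (m * s) = (p ^ s) ^ m := fun m => by
    rw [← pow_mul, mul_comm]
  have hgeom : ∀ m : ℕ, p ^ (m * s) - 1 = InvAux.E (p ^ s) m * (p ^ s - 1) := fun m => by
    rw [hpow m, ← InvAux.E_geom (p ^ s) (by omega) m, mul_comm]
  have hmono : ∀ m m' : ℕ, m < m' → p ^ (m * s) - 1 < p ^ (m' * s) - 1 := by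
    intro m m' hmm
    have h1 : (p ^ s) ^ m < (p ^ s) ^ m' := Nat.pow_lt_pow_right (by omega) hmm
    have h2 : 1 ≤ (p ^ s) ^ m := Nat.one_le_pow _ _ (by omega)
    rw [hpow m, hpow m']
    omega
  have hEmono : ∀ m m' : ℕ, p ^ (m * s) - 1 = p ^ (m' * s) - 1 → m = m' := by
    intro m m' h
    rcases Nat.lt_trichotomy m m' with hc | hc | hc
    · exact absurd h (by have := hmono m m' hc; omega)
    · exact hc
    · exact absurd h.symm (by have := hmono m' m hc; omega)
  have hsignE : ∀ m : ℕ, ((-1 : Polynomial (ZMod p))) ^ (InvAux.E (p ^ s) m) = (-1) ^ m := by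
    intro m
    induction m with
    | zero => rw [InvAux.E_zero]
    | succ m ihm =>
        rw [InvAux.E_succ, pow_add, pow_mul, InvAux.neg_one_pow_q' (p := p) s hs, ihm,
          pow_one, pow_succ]
  -- coefficients of the two series
  have hA : ∀ m : ℕ, PowerSeries.coeff (R := Polynomial (ZMod p)) (p ^ (m * s) - 1) (lhsSeries p s)
      = (-1) ^ m * Polynomial.X ^ (InvAux.E (p ^ s) m) := by
    intro m
    simp only [lhsSeries, PowerSeries.coeff_mk]
    rcases Nat.eq_zero_or_pos m with hm0 | hm1
    · subst hm0
      rw [if_pos (by simp), InvAux.E_zero]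
      simp
    · have hle : p ^ s ≤ p ^ (m * s) :=
        Nat.pow_le_pow_right (by omega) (Nat.le_mul_of_pos_left s hm1)
      have hj0 : p ^ (m * s) - 1 ≠ 0 := by omega
      rw [if_neg hj0]
      have hex : ∃ m', 1 ≤ m' ∧ p ^ (m * s) - 1 = p ^ (m' * s) - 1 := ⟨m, hm1, rfl⟩
      rw [dif_pos hex]
      have hcm : hex.choose = m := hEmono _ _ hex.choose_spec.2.symm
      rw [hcm, hgeom m, Nat.mul_div_cancel _ (by omega : 0 < p ^ s - 1)]
  have hB : ∀ n : ℕ, PowerSeries.coeff (R := Polynomial (ZMod p)) (n * (p ^ s - 1)) (rhsSeries p s)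
      = (-1) ^ n * Polynomial.C ((InvAux.cc (p ^ s) n : ℕ) : ZMod p) * Polynomial.X ^ n := by
    intro n
    simp only [rhsSeries, PowerSeries.coeff_mk]
    rcases Nat.eq_zero_or_pos n with hn0 | hn1
    · subst hn0
      rw [if_pos (by simp)]
      have : InvAux.cc (p ^ s) 0 = 1 := by simp [InvAux.cc]
      rw [this]
      simp
    · have hj0 : n * (p ^ s - 1) ≠ 0 := by
        have : 1 * (p ^ s - 1) ≤ n * (p ^ s - 1) := Nat.mul_le_mul_right _ hn1
        omega
      rw [if_neg hj0]
      have hex : ∃ n', 1 ≤ n' ∧ n * (p ^ s - 1) = n' * (p ^ s - 1) := ⟨n, hn1, rfl⟩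
      rw [dif_pos hex]
      have hcn : hex.choose = n :=
        Nat.eq_of_mul_eq_mul_right (by omega : 0 < p ^ s - 1) hex.choose_spec.2.symm
      rw [hcn, Polynomial.smul_eq_C_mul, ← mul_assoc]
      rfl
  have hBnot : ∀ j : ℕ, j ≠ 0 → (¬ ∃ n, 1 ≤ n ∧ j = n * (p ^ s - 1)) →
      PowerSeries.coeff (R := Polynomial (ZMod p)) j (rhsSeries p s) = 0 := by
    intro j hj0 hnone
    simp only [rhsSeries, PowerSeries.coeff_mk]
    rw [if_neg hj0, dif_neg hnone]
  have hAnot : ∀ j : ℕ, j ≠ 0 → (¬ ∃ m, 1 ≤ m ∧ j = p ^ (m * s) - 1) →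
      PowerSeries.coeff (R := Polynomial (ZMod p)) j (lhsSeries p s) = 0 := by
    intro j hj0 hnone
    simp only [lhsSeries, PowerSeries.coeff_mk]
    rw [if_neg hj0, dif_neg hnone]
  refine PowerSeries.ext fun N => ?_
  rw [PowerSeries.coeff_mul, PowerSeries.coeff_one,
    Finset.Nat.sum_antidiagonal_eq_sum_range_succ_mk]
  rcases Nat.eq_zero_or_pos N with hN0 | hN1
  · subst hN0
    rw [if_pos rfl, Finset.sum_range_one]
    simp [lhsSeries, rhsSeries, PowerSeries.coeff_mk]
  · rw [if_neg (by omega)]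
    have hfilter : ∑ i ∈ Finset.range (N + 1),
        (PowerSeries.coeff (R := Polynomial (ZMod p)) i (lhsSeries p s)) *
          (PowerSeries.coeff (R := Polynomial (ZMod p)) (N - i) (rhsSeries p s))
        = ∑ i ∈ (Finset.range (N + 1)).filter (fun i => ∃ m, m ≤ N ∧ i = p ^ (m * s) - 1),
            (PowerSeries.coeff (R := Polynomial (ZMod p)) i (lhsSeries p s)) *
              (PowerSeries.coeff (R := Polynomial (ZMod p)) (N - i) (rhsSeries p s)) := by
      symm
      apply Finset.sum_filter_of_ne
      intro i hi hne
      simp only [Finset.mem_range] at hi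
      by_contra hcon
      apply hne
      rcases Nat.eq_zero_or_pos i with hi0 | hi1
      · exact absurd ⟨0, by omega, by simp [hi0]⟩ hcon
      · rw [hAnot i (by omega) ?_, zero_mul]
        rintro ⟨m, hm1, hme⟩
        apply hcon
        refine ⟨m, ?_, hme⟩
        have h2 : m < 2 ^ m := Nat.lt_two_pow_self
        have h3 : 2 ^ m ≤ (p ^ s) ^ m := Nat.pow_le_pow_left (by omega) m
        have h4 := hpow m
        omega
    rw [hfilter]
    have hbij : ∑ i ∈ (Finset.range (N + 1)).filter (fun i => ∃ m, m ≤ N ∧ i = p ^ (m * s) - 1),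
        (PowerSeries.coeff (R := Polynomial (ZMod p)) i (lhsSeries p s)) *
          (PowerSeries.coeff (R := Polynomial (ZMod p)) (N - i) (rhsSeries p s))
        = ∑ m ∈ (Finset.range (N + 1)).filter (fun m => p ^ (m * s) - 1 ≤ N),
            (PowerSeries.coeff (R := Polynomial (ZMod p)) (p ^ (m * s) - 1) (lhsSeries p s)) *
              (PowerSeries.coeff (R := Polynomial (ZMod p)) (N - (p ^ (m * s) - 1)) (rhsSeries p s)) := by
      symm
      apply Finset.sum_nbij (fun m => p ^ (m * s) - 1)
      · intro m hm
        simp only [Finset.mem_filter, Finset.mem_range] at hm ⊢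
        exact ⟨by omega, m, by omega, rfl⟩
      · intro m hm m' hm' h
        exact hEmono m m' h
      · rintro i hi
        simp only [Finset.coe_filter, Finset.mem_range, Set.mem_setOf_eq] at hi
        obtain ⟨hiN, m, hmN, hmi⟩ := hi
        refine ⟨m, ?_, hmi.symm⟩
        simp only [Finset.coe_filter, Finset.mem_range, Set.mem_setOf_eq]
        exact ⟨by omega, by omega⟩
      · intro m hm
        rfl
    rw [hbij]
    by_cases hdvd : (p ^ s - 1) ∣ N
    · obtain ⟨k, hk⟩ := hdvd
      have hck : k * (p ^ s - 1) = N := by rw [hk]; ring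
      have hk1 : 1 ≤ k := by
        rcases Nat.eq_zero_or_pos k with h' | h'
        · subst h'; omega
        · exact h'
      have hcond : ∀ m : ℕ, (p ^ (m * s) - 1 ≤ N) ↔ InvAux.E (p ^ s) m ≤ k := by
        intro m
        rw [hgeom m, ← hck]
        constructor
        · intro h
          by_contra h'
          push_neg at h'
          have : (k + 1) * (p ^ s - 1) ≤ InvAux.E (p ^ s) m * (p ^ s - 1) :=
            Nat.mul_le_mul_right _ (by omega)
          have h2 : (k + 1) * (p ^ s - 1) = k * (p ^ s - 1) + (p ^ s - 1) := by ring
          omega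
        · intro h
          exact Nat.mul_le_mul_right _ h
      have hterm : ∀ m ∈ (Finset.range (N + 1)).filter (fun m => p ^ (m * s) - 1 ≤ N),
          (PowerSeries.coeff (R := Polynomial (ZMod p)) (p ^ (m * s) - 1) (lhsSeries p s)) *
            (PowerSeries.coeff (R := Polynomial (ZMod p)) (N - (p ^ (m * s) - 1)) (rhsSeries p s))
          = ((-1) ^ k * Polynomial.X ^ k) *
              Polynomial.C ((InvAux.cc (p ^ s) (k - InvAux.E (p ^ s) m) : ℕ) : ZMod p) := by
        intro m hm
        simp only [Finset.mem_filter, Finset.mem_range] at hm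
        have hEk : InvAux.E (p ^ s) m ≤ k := (hcond m).mp hm.2
        have hsub : N - (p ^ (m * s) - 1) = (k - InvAux.E (p ^ s) m) * (p ^ s - 1) := by
          rw [hgeom m, ← hck]
          have hexp : (k - InvAux.E (p ^ s) m) * (p ^ s - 1)
              + InvAux.E (p ^ s) m * (p ^ s - 1) = k * (p ^ s - 1) := by
            calc (k - InvAux.E (p ^ s) m) * (p ^ s - 1) + InvAux.E (p ^ s) m * (p ^ s - 1)
                = (k - InvAux.E (p ^ s) m + InvAux.E (p ^ s) m) * (p ^ s - 1) := by ring
              _ = k * (p ^ s - 1) := by congr 1; omega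
          omega
        rw [hA m, hsub, hB (k - InvAux.E (p ^ s) m)]
        have hsign : ((-1 : Polynomial (ZMod p))) ^ m * (-1) ^ (k - InvAux.E (p ^ s) m)
            = (-1) ^ k := by
          rw [← hsignE m, ← pow_add]
          congr 1
          omega
        have hXpow : (Polynomial.X : Polynomial (ZMod p)) ^ (InvAux.E (p ^ s) m) *
            Polynomial.X ^ (k - InvAux.E (p ^ s) m) = Polynomial.X ^ k := by
          rw [← pow_add]
          congr 1
          omega
        calc ((-1) ^ m * Polynomial.X ^ (InvAux.E (p ^ s) m)) *
              ((-1) ^ (k - InvAux.E (p ^ s) m) *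
                Polynomial.C ((InvAux.cc (p ^ s) (k - InvAux.E (p ^ s) m) : ℕ) : ZMod p) *
                Polynomial.X ^ (k - InvAux.E (p ^ s) m))
            = ((-1) ^ m * (-1) ^ (k - InvAux.E (p ^ s) m)) *
              (Polynomial.X ^ (InvAux.E (p ^ s) m) *
                Polynomial.X ^ (k - InvAux.E (p ^ s) m)) *
              Polynomial.C ((InvAux.cc (p ^ s) (k - InvAux.E (p ^ s) m) : ℕ) : ZMod p) := by
              ring
          _ = ((-1) ^ k * Polynomial.X ^ k) *
              Polynomial.C ((InvAux.cc (p ^ s) (k - InvAux.E (p ^ s) m) : ℕ) : ZMod p) := by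
              rw [hsign, hXpow]
      rw [Finset.sum_congr rfl hterm, ← Finset.mul_sum, ← map_sum]
      have hinner : ∑ m ∈ (Finset.range (N + 1)).filter (fun m => p ^ (m * s) - 1 ≤ N),
          ((InvAux.cc (p ^ s) (k - InvAux.E (p ^ s) m) : ℕ) : ZMod p)
          = ∑ m ∈ Finset.range (k + 1),
              if InvAux.E (p ^ s) m ≤ k
                then ((InvAux.cc (p ^ s) (k - InvAux.E (p ^ s) m) : ℕ) : ZMod p) else 0 := by
        rw [Finset.sum_filter]
        have hkN : k + 1 ≤ N + 1 := by
          have : k * 1 ≤ k * (p ^ s - 1) := Nat.mul_le_mul_left _ (by omega)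
          omega
        rw [Finset.sum_congr rfl
          (fun m _ => if_congr (hcond m) rfl rfl)]
        symm
        apply Finset.sum_subset (Finset.range_subset_range.mpr hkN)
        intro m hm hnot
        rw [if_neg]
        have := InvAux.le_E (p ^ s) (by omega) m
        simp only [Finset.mem_range] at hm hnot
        omega
      rw [hinner, InvAux.Ssum_eq (p := p) s hs k, if_neg (by omega), map_zero, mul_zero]
    · apply Finset.sum_eq_zero
      intro m hm
      simp only [Finset.mem_filter, Finset.mem_range] at hm
      have hzero : PowerSeries.coeff (R := Polynomial (ZMod p)) (N - (p ^ (m * s) - 1))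
          (rhsSeries p s) = 0 := by
        rcases Nat.eq_zero_or_pos (N - (p ^ (m * s) - 1)) with h0 | h1
        · exfalso
          apply hdvd
          have hNe : N = InvAux.E (p ^ s) m * (p ^ s - 1) := by
            rw [← hgeom m]; omega
          rw [hNe]
          exact Dvd.intro_left _ rfl
        · apply hBnot _ (by omega)
          rintro ⟨n, hn1, hne⟩
          apply hdvd
          have hNe : N = (InvAux.E (p ^ s) m + n) * (p ^ s - 1) := by
            have := hgeom m
            calc N = (p ^ (m * s) - 1) + (N - (p ^ (m * s) - 1)) := by omega
              _ = InvAux.E (p ^ s) m * (p ^ s - 1) + n * (p ^ s - 1) := by rw [← this, hne]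
              _ = (InvAux.E (p ^ s) m + n) * (p ^ s - 1) := by ring
          rw [hNe]
          exact Dvd.intro_left _ rfl
      rw [hzero, mul_zero]
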